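/- For every integer k ≥ 3, there exists a constant C > 0 such that, in the local certification model with verification radius 1, there is a local certification scheme for K_k-freeness whose certificates have size at most C·n bits on n-vertex graphs. -/
import Mathlib


open scoped Classical

/-- A graph property: for each number of vertices `n`, a predicate on graphs on `Fin n`. -/
abbrev GraphProperty : Type := ∀ n : ℕ, SimpleGraph (Fin n) → Prop

/-- The local view of a vertex `u` in the local certification model with verification
radius 1: the identifier of `u`, the certificate of `u`, and the set of pairs
(identifier, certificate) over the neighbors of `u`. -/
noncomputable def localView {n : ℕ} (G : SimpleGraph (Fin n)) (ident : Fin n → ℕ)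
    (cert : Fin n → List Bool) (u : Fin n) :
    ℕ × List Bool × Finset (ℕ × List Bool) :=
  (ident u, cert u,
    (Finset.univ.filter (fun v => G.Adj u v)).image (fun v => (ident v, cert v)))

/-- `IsCertificationScheme c verifier s P` means: `verifier` is a local verification
procedure (with verification radius 1) which is a local certification scheme for the
property `P` with certificates of size `s`, in the model where identifiers of `n`-vertex
graphs are distinct elements of `{1, …, n^c}`.  For every connected graph `G` on `Fin n`
and every identifier assignment: if `P` holds, some certificate assignment (binary strings
of length `s n`) makes every vertex accept (completeness), and if `P` fails, every
certificate assignment makes at least one vertex reject (soundness). -/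
def IsCertificationScheme (c : ℕ)
    (verifier : ℕ × List Bool × Finset (ℕ × List Bool) → Bool)
    (s : ℕ → ℕ) (P : GraphProperty) : Prop :=
  ∀ (n : ℕ) (G : SimpleGraph (Fin n)), G.Connected →
    ∀ ident : Fin n → ℕ, Function.Injective ident →
      (∀ v, 1 ≤ ident v ∧ ident v ≤ n ^ c) →
      (P n G ↔ ∃ cert : Fin n → List Bool,
        (∀ v, (cert v).length = s n) ∧
        ∀ u : Fin n, verifier (localView G ident cert u) = true)

/-- A graph is `P_k`-free if it contains no induced subgraph isomorphic to the path on
`k` vertices (graph embeddings are exactly induced-subgraph inclusions). -/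
def PathFree (k : ℕ) {V : Type*} (G : SimpleGraph V) : Prop :=
  IsEmpty (SimpleGraph.pathGraph k ↪g G)


noncomputable section CliqueCert

/-- Half of the length of a list. -/
def halfLen (l : List Bool) : ℕ := l.length / 2

/-- Bit `j` of the first half of the certificate. -/
def bitL (l : List Bool) (j : ℕ) : Bool := (l.take (halfLen l)).getD j false

/-- Bit `j` of the second half of the certificate. -/
def bitR (l : List Bool) (j : ℕ) : Bool := (l.drop (halfLen l)).getD j false

/-- The first half of `l` is the indicator vector of position `i`. -/
def IsIdx (l : List Bool) (i : ℕ) : Prop :=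
  i < halfLen l ∧ ∀ j < halfLen l, (bitL l j = true ↔ j = i)

lemma IsIdx.unique {l : List Bool} {i i' : ℕ} (h : IsIdx l i) (h' : IsIdx l i') :
    i = i' :=
  ((h'.2 i h.1).mp ((h.2 i h.1).mpr rfl))

/-- The canonical decoded index of a certificate. -/
def decodeIdx (l : List Bool) : ℕ := sInf {i | IsIdx l i}

lemma decodeIdx_eq {l : List Bool} {i : ℕ} (h : IsIdx l i) : decodeIdx l = i := by
  have hne : {j | IsIdx l j}.Nonempty := ⟨i, h⟩
  exact (Nat.sInf_mem hne).unique h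

/-- The acceptance predicate of the verifier. -/
def Accepts (k : ℕ) (x : ℕ × List Bool × Finset (ℕ × List Bool)) : Prop :=
  ∃ i : ℕ,
    IsIdx x.2.1 i ∧
    (∀ p ∈ x.2.2, IsIdx p.2 (decodeIdx p.2)) ∧
    (∀ p ∈ x.2.2, bitR p.2 i = true) ∧
    (∀ p ∈ x.2.2, ∀ q ∈ x.2.2, p ≠ q → decodeIdx p.2 ≠ decodeIdx q.2) ∧
    ¬ ∃ S : Finset (ℕ × List Bool), S ⊆ x.2.2 ∧ S.card = k - 1 ∧
        ∀ p ∈ S, ∀ q ∈ S, p ≠ q → bitR p.2 (decodeIdx q.2) = true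

/-- The honest certificate of vertex `v`: its indicator vector followed by its
adjacency row. -/
def honestCert {n : ℕ} (G : SimpleGraph (Fin n)) (v : Fin n) : List Bool :=
  (List.ofFn fun j : Fin n => decide ((j : ℕ) = (v : ℕ))) ++
    (List.ofFn fun j : Fin n => decide (G.Adj v j))

lemma honestCert_length {n : ℕ} (G : SimpleGraph (Fin n)) (v : Fin n) :
    (honestCert G v).length = n + n := by
  simp [honestCert]

lemma halfLen_honest {n : ℕ} (G : SimpleGraph (Fin n)) (v : Fin n) :
    halfLen (honestCert G v) = n := by
  simp [halfLen, honestCert_length]; omega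

lemma take_honest {n : ℕ} (G : SimpleGraph (Fin n)) (v : Fin n) :
    (honestCert G v).take (halfLen (honestCert G v)) =
      List.ofFn fun j : Fin n => decide ((j : ℕ) = (v : ℕ)) := by
  rw [halfLen_honest, honestCert]
  exact List.take_left' (by simp)

lemma drop_honest {n : ℕ} (G : SimpleGraph (Fin n)) (v : Fin n) :
    (honestCert G v).drop (halfLen (honestCert G v)) =
      List.ofFn fun j : Fin n => decide (G.Adj v j) := by
  rw [halfLen_honest, honestCert]
  exact List.drop_left' (by simp)

lemma bitL_honest {n : ℕ} (G : SimpleGraph (Fin n)) (v : Fin n) {j : ℕ} (hj : j < n) :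
    bitL (honestCert G v) j = decide (j = (v : ℕ)) := by
  rw [bitL, take_honest]
  rw [List.getD_eq_getElem _ _ (by simpa using hj), List.getElem_ofFn]

lemma bitR_honest {n : ℕ} (G : SimpleGraph (Fin n)) (v : Fin n) {j : ℕ} (hj : j < n) :
    bitR (honestCert G v) j = decide (G.Adj v ⟨j, hj⟩) := by
  rw [bitR, drop_honest]
  rw [List.getD_eq_getElem _ _ (by simpa using hj), List.getElem_ofFn]

lemma isIdx_honest {n : ℕ} (G : SimpleGraph (Fin n)) (v : Fin n) :
    IsIdx (honestCert G v) (v : ℕ) := by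
  refine ⟨by rw [halfLen_honest]; exact v.2, fun j hj => ?_⟩
  rw [halfLen_honest] at hj
  rw [bitL_honest G v hj]
  simp

lemma decodeIdx_honest {n : ℕ} (G : SimpleGraph (Fin n)) (v : Fin n) :
    decodeIdx (honestCert G v) = (v : ℕ) :=
  decodeIdx_eq (isIdx_honest G v)

end CliqueCert

/-- For every `k ≥ 3`, there is a constant `C > 0` such that, in the local certification
model with verification radius 1, there is a local certification scheme for
`K_k`-freeness with certificates of size at most `C * n` bits on `n`-vertex graphs. -/
theorem cliquefree_certification_upper_bound (k : ℕ) (hk : 3 ≤ k) :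
    ∃ C : ℝ, 0 < C ∧
      ∀ c : ℕ, 1 ≤ c →
        ∃ (verifier : ℕ × List Bool × Finset (ℕ × List Bool) → Bool) (s : ℕ → ℕ),
          (∀ n : ℕ, (s n : ℝ) ≤ C * (n : ℝ)) ∧
          IsCertificationScheme c verifier s (fun _ G => G.CliqueFree k) := by
  refine ⟨2, by norm_num, fun c _ => ?_⟩
  refine ⟨fun x => @decide (Accepts k x) (Classical.propDecidable _), fun n => n + n, ?_, ?_⟩
  · intro n
    push_cast
    nlinarith [Nat.cast_nonneg (α := ℝ) n]
  · intro n G _ ident hinj _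
    have hφ : ∀ cert : Fin n → List Bool,
        Function.Injective (fun v : Fin n => (ident v, cert v)) := by
      intro cert a b h
      exact hinj (congrArg Prod.fst h)
    have hmem : ∀ (cert : Fin n → List Bool) (v w : Fin n), G.Adj v w →
        (ident w, cert w) ∈ (localView G ident cert v).2.2 := by
      intro cert v w h
      exact Finset.mem_image.mpr ⟨w, Finset.mem_filter.mpr ⟨Finset.mem_univ _, h⟩, rfl⟩
    have hmem' : ∀ (cert : Fin n → List Bool) (v : Fin n) (p : ℕ × List Bool),
        p ∈ (localView G ident cert v).2.2 → ∃ w, G.Adj v w ∧ (ident w, cert w) = p := by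
      intro cert v p hp
      obtain ⟨w, hw, hwp⟩ := Finset.mem_image.mp hp
      exact ⟨w, (Finset.mem_filter.mp hw).2, hwp⟩
    constructor
    · -- completeness
      intro hfree
      refine ⟨fun v => honestCert G v, fun v => honestCert_length G v, fun u => ?_⟩
      rw [decide_eq_true_eq]
      refine ⟨(u : ℕ), isIdx_honest G u, ?_, ?_, ?_, ?_⟩
      · intro p hp
        obtain ⟨w, _, rfl⟩ := hmem' _ u p hp
        rw [decodeIdx_honest]
        exact isIdx_honest G w
      · intro p hp
        obtain ⟨w, hadj, rfl⟩ := hmem' _ u p hp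
        rw [bitR_honest G w u.2, decide_eq_true_eq]
        simpa using hadj.symm
      · intro p hp q hq hpq
        obtain ⟨w, _, rfl⟩ := hmem' _ u p hp
        obtain ⟨w', _, rfl⟩ := hmem' _ u q hq
        rw [decodeIdx_honest, decodeIdx_honest]
        intro h
        exact hpq (by rw [Fin.val_injective h])
      · rintro ⟨S, hSsub, hScard, hSpair⟩
        set φ : Fin n → ℕ × List Bool := fun v => (ident v, honestCert G v) with hφdef
        set T : Finset (Fin n) :=
          Finset.univ.filter (fun v => G.Adj u v ∧ φ v ∈ S) with hTdef
        have himg : T.image φ = S := by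
          apply Finset.Subset.antisymm
          · intro p hp
            obtain ⟨v, hvT, rfl⟩ := Finset.mem_image.mp hp
            exact ((Finset.mem_filter.mp hvT).2).2
          · intro p hp
            obtain ⟨v, hadj, hvp⟩ := hmem' _ u p (hSsub hp)
            refine Finset.mem_image.mpr
              ⟨v, Finset.mem_filter.mpr ⟨Finset.mem_univ v, hadj, ?_⟩, hvp⟩
            rw [hφdef]; simpa [hvp] using hp
        have hTcard : T.card = k - 1 := by
          rw [← himg, Finset.card_image_of_injective _ (hφ _)] at hScard
          exact hScard
        have huT : u ∉ T := by
          intro h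
          exact G.irrefl ((Finset.mem_filter.mp h).2).1
        have hadjT : ∀ v ∈ T, G.Adj u v := fun v hv => ((Finset.mem_filter.mp hv).2).1
        have hTadj : ∀ a ∈ T, ∀ b ∈ T, a ≠ b → G.Adj a b := by
          intro a ha b hb hab
          have hpS : φ a ∈ S := ((Finset.mem_filter.mp ha).2).2
          have hqS : φ b ∈ S := ((Finset.mem_filter.mp hb).2).2
          have hne : φ a ≠ φ b := fun h => hab (hφ _ h)
          have := hSpair (φ a) hpS (φ b) hqS hne
          rw [hφdef] at this
          simp only at this
          rw [decodeIdx_honest, bitR_honest G a b.2, decide_eq_true_eq] at this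
          simpa using this
        refine hfree (insert u T) ⟨?_, ?_⟩
        · intro a ha b hb hab
          rw [Finset.coe_insert, Set.mem_insert_iff, Finset.mem_coe] at ha hb
          rcases ha with rfl | ha
          · rcases hb with rfl | hb
            · exact absurd rfl hab
            · exact hadjT b hb
          · rcases hb with rfl | hb
            · exact (hadjT a ha).symm
            · exact hTadj a ha b hb hab
        · rw [Finset.card_insert_of_notMem huT, hTcard]
          omega
    · -- soundness
      rintro ⟨cert, hlen, hacc⟩
      intro t ht
      have hA : ∀ v, Accepts k (localView G ident cert v) := by
        intro v
        have := hacc v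
        rwa [decide_eq_true_eq] at this
      have htne : t.Nonempty := by
        rw [← Finset.card_pos, ht.2]; omega
      obtain ⟨u, hu⟩ := htne
      obtain ⟨iu, hIu, hJ, hRow, hinj', hnoS⟩ := hA u
      set φ : Fin n → ℕ × List Bool := fun v => (ident v, cert v) with hφdef
      have hadj : ∀ v ∈ t, ∀ w ∈ t, v ≠ w → G.Adj v w := by
        intro v hv w hw hvw
        exact ht.1 (Finset.mem_coe.mpr hv) (Finset.mem_coe.mpr hw) hvw
      set S : Finset (ℕ × List Bool) := (t.erase u).image φ with hSdef
      have hSsub : S ⊆ (localView G ident cert u).2.2 := by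
        intro p hp
        obtain ⟨v, hv, rfl⟩ := Finset.mem_image.mp hp
        exact hmem cert u v
          (hadj u hu v (Finset.mem_of_mem_erase hv) (Finset.ne_of_mem_erase hv).symm)
      have hScard : S.card = k - 1 := by
        rw [hSdef, Finset.card_image_of_injective _ (hφ _),
          Finset.card_erase_of_mem hu, ht.2]
      refine hnoS ⟨S, hSsub, hScard, ?_⟩
      intro p hp q hq hpq
      obtain ⟨a, ha, rfl⟩ := Finset.mem_image.mp hp
      obtain ⟨b, hb, rfl⟩ := Finset.mem_image.mp hq
      have hab : a ≠ b := fun h => hpq (by rw [h])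
      obtain ⟨ib, hIb, _, hRowb, _, _⟩ := hA b
      have hdec : decodeIdx (cert b) = ib := by
        have h1 : IsIdx (cert b) (decodeIdx (cert b)) := hJ (φ b) (hSsub hq)
        exact h1.unique hIb
      have hba : G.Adj b a := by
        refine hadj b (Finset.mem_of_mem_erase hb) a (Finset.mem_of_mem_erase ha) ?_
        exact hab.symm
      have := hRowb (φ a) (hmem cert b a hba)
      rw [hφdef]
      simpa [hdec] using this
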